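/- If Δ ≥ 0 is a nonnegative n×n matrix such that d(A, Δ) = ∞ for some nonsingular matrix A, then Δ has at most n(n−1)/2 nonzero entries; combined with the triangular example, n(n−1)/2 is the maximal number of nonzero entries of Δ compatible with an infinite regularity radius. -/

import Mathlib

open Matrix
open scoped ENNReal NNReal

noncomputable def regRad {n : ℕ} (A Δ : Matrix (Fin n) (Fin n) ℝ) : ℝ≥0∞ :=
  ⨅ δ ∈ {δ : ℝ≥0 | ∃ M : Matrix (Fin n) (Fin n) ℝ,
      (∀ i j, |M i j - A i j| ≤ (δ : ℝ) * Δ i j) ∧ M.det = 0},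
    (δ : ℝ≥0∞)

/-- Determinant of a two-entry perturbation of an invertible matrix. -/
lemma det_two_entry_update {n : ℕ} (A : Matrix (Fin n) (Fin n) ℝ) (hA : A.det ≠ 0)
    (i j k l : Fin n) (s t : ℝ) :
    (A + Matrix.single i j s + Matrix.single k l t).det
      = A.det * ((1 + s * A⁻¹ j i) * (1 + t * A⁻¹ l k) - s * t * (A⁻¹ j k * A⁻¹ l i)) := by
  have aux : ∀ (p q a b : Fin n) (x : ℝ),
      (if a = p then x else 0) * (if b = q then (1:ℝ) else 0)
        = if p = a ∧ q = b then x else 0 := by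
    intro p q a b x
    split_ifs with h1 h2 h3 <;> simp_all <;> tauto
  set U : Matrix (Fin n) (Fin 2) ℝ :=
    Matrix.of fun a p => if p = 0 then (if a = i then s else 0) else (if a = k then t else 0)
    with hU
  set V : Matrix (Fin 2) (Fin n) ℝ :=
    Matrix.of fun p b => if p = 0 then (if b = j then (1:ℝ) else 0) else (if b = l then 1 else 0)
    with hV
  have hUV : U * V = Matrix.single i j s + Matrix.single k l t := by
    ext a b
    rw [Matrix.mul_apply, Fin.sum_univ_two]
    simp only [hU, hV, Matrix.of_apply, Matrix.add_apply, Matrix.single,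
      if_pos rfl, one_ne_zero, if_neg (one_ne_zero (α := Fin 2)), if_true, if_false]
    rw [aux, aux]
  have hAB : A * A⁻¹ = 1 := Matrix.mul_nonsing_inv A (isUnit_iff_ne_zero.mpr hA)
  have hfact : A + Matrix.single i j s + Matrix.single k l t
      = A * (1 + (A⁻¹ * U) * V) := by
    rw [Matrix.mul_add, Matrix.mul_one, add_assoc, ← Matrix.mul_assoc, ← Matrix.mul_assoc,
      hAB, Matrix.one_mul, hUV]
  rw [hfact, Matrix.det_mul, Matrix.det_one_add_mul_comm]
  congr 1
  have hBU : ∀ (c : Fin n) (q : Fin 2),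
      (A⁻¹ * U) c q = if q = 0 then s * A⁻¹ c i else t * A⁻¹ c k := by
    intro c q
    by_cases hq : q = 0 <;>
      simp [Matrix.mul_apply, hU, hq, mul_ite, Finset.sum_ite_eq', mul_comm]
  have h2 : V * (A⁻¹ * U) =
      Matrix.of (fun p q : Fin 2 =>
        if p = 0 then (if q = 0 then s * A⁻¹ j i else t * A⁻¹ j k)
        else (if q = 0 then s * A⁻¹ l i else t * A⁻¹ l k)) := by
    ext p q
    by_cases hp : p = 0 <;>
      simp [Matrix.mul_apply, hV, hp, hBU, ite_mul, Finset.sum_ite_eq']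
  rw [h2, Matrix.det_fin_two]
  simp [Matrix.one_apply]
  ring

theorem nonzero_entries_le_of_regRad_infinite {n : ℕ} (A Δ : Matrix (Fin n) (Fin n) ℝ)
    (hA : A.det ≠ 0) (hΔ : ∀ i j, 0 ≤ Δ i j) (hinf : regRad A Δ = ⊤) :
    {p : Fin n × Fin n | Δ p.1 p.2 ≠ 0}.ncard ≤ n * (n - 1) / 2 := by
  set P := {p : Fin n × Fin n | Δ p.1 p.2 ≠ 0} with hP
  -- Step 1: any matrix within some δ-interval is nonsingular
  have step1 : ∀ (δ : ℝ≥0) (M : Matrix (Fin n) (Fin n) ℝ),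
      (∀ i j, |M i j - A i j| ≤ (δ : ℝ) * Δ i j) → M.det ≠ 0 := by
    intro δ M hM hdet
    have hmem : δ ∈ {δ : ℝ≥0 | ∃ M : Matrix (Fin n) (Fin n) ℝ,
        (∀ i j, |M i j - A i j| ≤ (δ : ℝ) * Δ i j) ∧ M.det = 0} := ⟨M, hM, hdet⟩
    have hle : regRad A Δ ≤ (δ : ℝ≥0∞) := iInf₂_le δ hmem
    rw [hinf] at hle
    exact (ENNReal.coe_ne_top (r := δ)) (top_le_iff.mp hle)
  -- Step 2: any matrix agreeing with A off the support of Δ is nonsingular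
  have step2 : ∀ M : Matrix (Fin n) (Fin n) ℝ,
      (∀ i j, Δ i j = 0 → M i j = A i j) → M.det ≠ 0 := by
    intro M hM
    set δ : ℝ≥0 := Finset.univ.sup
      (fun p : Fin n × Fin n => Real.toNNReal (|M p.1 p.2 - A p.1 p.2| / Δ p.1 p.2)) with hδ
    refine step1 δ M ?_
    intro i j
    by_cases h0 : Δ i j = 0
    · rw [hM i j h0, h0, sub_self, abs_zero, mul_zero]
    · have hpos : 0 < Δ i j := lt_of_le_of_ne (hΔ i j) (Ne.symm h0)
      have h1 : Real.toNNReal (|M i j - A i j| / Δ i j) ≤ δ :=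
        Finset.le_sup (f := fun p : Fin n × Fin n =>
          Real.toNNReal (|M p.1 p.2 - A p.1 p.2| / Δ p.1 p.2)) (Finset.mem_univ (i, j))
      have h2 : |M i j - A i j| / Δ i j ≤ (δ : ℝ) := by
        refine le_trans (Real.le_coe_toNNReal _) ?_
        exact_mod_cast h1
      calc |M i j - A i j| = (|M i j - A i j| / Δ i j) * Δ i j := by
            field_simp
        _ ≤ (δ : ℝ) * Δ i j := mul_le_mul_of_nonneg_right h2 (hΔ i j)
  -- entries of A⁻¹ vanish at transposed support positions
  have hB1 : ∀ p ∈ P, A⁻¹ p.2 p.1 = 0 := by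
    rintro ⟨i, j⟩ hij
    by_contra hne
    have key := det_two_entry_update A hA i j i j (-(A⁻¹ j i)⁻¹) 0
    rw [Matrix.single_zero, add_zero] at key
    have hdet : (A + Matrix.single i j (-(A⁻¹ j i)⁻¹)).det = 0 := by
      rw [key, neg_mul, inv_mul_cancel₀ hne]
      ring
    refine step2 _ ?_ hdet
    intro a b h0
    simp only [Matrix.add_apply, Matrix.single, Matrix.of_apply]
    rw [if_neg, add_zero]
    rintro ⟨rfl, rfl⟩
    exact hij h0
  have hB2 : ∀ p ∈ P, ∀ q ∈ P, A⁻¹ p.2 q.1 * A⁻¹ q.2 p.1 = 0 := by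
    rintro ⟨i, j⟩ hij ⟨k, l⟩ hkl
    change A⁻¹ j k * A⁻¹ l i = 0
    by_contra hne
    have key := det_two_entry_update A hA i j k l 1 (A⁻¹ j k * A⁻¹ l i)⁻¹
    have hji : A⁻¹ j i = 0 := hB1 _ hij
    have hlk : A⁻¹ l k = 0 := hB1 _ hkl
    have hdet : (A + Matrix.single i j 1
        + Matrix.single k l (A⁻¹ j k * A⁻¹ l i)⁻¹).det = 0 := by
      have h1 : (1:ℝ) * (A⁻¹ j k * A⁻¹ l i)⁻¹ * (A⁻¹ j k * A⁻¹ l i) = 1 := by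
        rw [one_mul, inv_mul_cancel₀ hne]
      rw [key, hji, hlk, h1]
      ring
    refine step2 _ ?_ hdet
    intro a b h0
    simp only [Matrix.add_apply, Matrix.single, Matrix.of_apply]
    rw [if_neg, if_neg, add_zero, add_zero]
    · rintro ⟨rfl, rfl⟩; exact hkl h0
    · rintro ⟨rfl, rfl⟩; exact hij h0
  -- A⁻¹ is invertible, extract a nonzero permutation pattern
  have hBdet : (A⁻¹).det ≠ 0 := by
    rw [Matrix.det_nonsing_inv, Ring.inverse_eq_inv]
    exact inv_ne_zero hA
  have hσ : ∃ σ : Equiv.Perm (Fin n), ∀ m, A⁻¹ (σ m) m ≠ 0 := by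
    by_contra h
    push_neg at h
    apply hBdet
    rw [Matrix.det_apply]
    refine Finset.sum_eq_zero fun σ _ => ?_
    obtain ⟨m, hm⟩ := h σ
    have : (∏ i, A⁻¹ (σ i) i) = 0 := Finset.prod_eq_zero (Finset.mem_univ m) hm
    rw [this, smul_zero]
  obtain ⟨σ, hσ⟩ := hσ
  -- injective map into non-diagonal unordered pairs
  set f : Fin n × Fin n → Sym2 (Fin n) := fun p => s(σ p.1, p.2) with hf
  have hnd : ∀ p ∈ P, ¬ (f p).IsDiag := by
    rintro ⟨i, j⟩ hij
    simp only [hf, Sym2.isDiag_iff_proj_eq]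
    intro hd
    exact hσ i (by rw [hd]; exact hB1 _ hij)
  have hinj : Set.InjOn f P := by
    rintro ⟨i, j⟩ hij ⟨k, l⟩ hkl heq
    simp only [hf, Sym2.eq_iff] at heq
    rcases heq with ⟨h1, h2⟩ | ⟨h1, h2⟩
    · exact Prod.ext (σ.injective h1) h2
    · exfalso
      apply mul_ne_zero (a := A⁻¹ j k) (b := A⁻¹ l i) ?_ ?_ (hB2 _ hij _ hkl)
      · rw [h2]; exact hσ k
      · rw [← h1]; exact hσ i
  have himg : f '' P ⊆ {z : Sym2 (Fin n) | ¬ z.IsDiag} := by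
    rintro z ⟨p, hp, rfl⟩
    exact hnd p hp
  have hcard : {z : Sym2 (Fin n) | ¬ z.IsDiag}.ncard = n * (n - 1) / 2 := by
    rw [← Nat.card_coe_set_eq, Nat.card_eq_fintype_card]
    rw [show Fintype.card {z : Sym2 (Fin n) | ¬ z.IsDiag}
        = Fintype.card {z : Sym2 (Fin n) // ¬ z.IsDiag} from rfl]
    rw [Sym2.card_subtype_not_diag, Fintype.card_fin, Nat.choose_two_right]
  calc P.ncard = (f '' P).ncard := (Set.ncard_image_of_injOn hinj).symm
    _ ≤ {z : Sym2 (Fin n) | ¬ z.IsDiag}.ncard := Set.ncard_le_ncard himg (Set.toFinite _)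
    _ = n * (n - 1) / 2 := hcard
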